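/- Let Y be a closed right submodule of a Clifford module H_n and Y^⊥ = {x : ⟨x,y⟩ = 0 for all y ∈ Y}. Then Y^⊥ is a closed right submodule, H_n = Y ⊕ Y^⊥ (every x decomposes uniquely as y + z with y ∈ Y, z ∈ Y^⊥), and (Y^⊥)^⊥ = Y. -/

import Mathlib

/-- The real Clifford algebra `ℝ_{0,n}`, modelled concretely on its basis
`{e_α : α ⊆ {1,…,n}}` as coefficient functions `Finset (Fin n) → ℝ`. -/
abbrev CliffAlg (n : ℕ) := Finset (Fin n) → ℝ

/-- The sign occurring in the product of basis elements `e_S * e_T`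
(coming from `e_i² = -1` and `e_i e_j = -e_j e_i` for `i ≠ j`). -/
def csign {n : ℕ} (S T : Finset (Fin n)) : ℝ :=
  (-1 : ℝ) ^ ((∑ t ∈ T, (S.filter fun s => t < s).card) + (S ∩ T).card)

/-- Clifford multiplication on `ℝ_{0,n}`: `e_S e_T = csign S T • e_{S ∆ T}`. -/
def cmul {n : ℕ} (a b : CliffAlg n) : CliffAlg n := fun U =>
  ∑ S : Finset (Fin n), ∑ T : Finset (Fin n),
    (if symmDiff S T = U then a S * b T * csign S T else 0)

/-- The unit `1 = e_∅` of the Clifford algebra. -/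
def cone {n : ℕ} : CliffAlg n := fun S => if S = (∅ : Finset (Fin n)) then 1 else 0

/-- Clifford conjugation `a ↦ ā` (on the basis, `ē_α = (-1)^{k(k+1)/2} e_α` for `k = |α|`). -/
def cconj {n : ℕ} (a : CliffAlg n) : CliffAlg n := fun S =>
  (-1 : ℝ) ^ (S.card * (S.card + 1) / 2) * a S

/-- The Euclidean norm of the coefficients, `|a| = (∑_α a_α²)^{1/2}`. -/
noncomputable def cnorm {n : ℕ} (a : CliffAlg n) : ℝ :=
  Real.sqrt (∑ S : Finset (Fin n), a S ^ 2)

/-- The real (scalar) part of a Clifford number. -/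
def cre {n : ℕ} (a : CliffAlg n) : ℝ := a ∅

/-- Positive semidefinite Clifford numbers: those of the form `a = b b̄`. -/
def CPos {n : ℕ} (a : CliffAlg n) : Prop := ∃ b : CliffAlg n, a = cmul b (cconj b)

/-- The purely imaginary paravector `Σ i, v i • e_i`. -/
def cvec {n : ℕ} (v : Fin n → ℝ) : CliffAlg n := fun S =>
  ∑ i : Fin n, if S = {i} then v i else 0

/-- A Clifford (Hilbert) module `H_n` over `ℝ_{0,n}`: a real vector space with a right
`ℝ_{0,n}`-action `smulR` and an `ℝ_{0,n}`-valued inner product `inner`. -/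
structure CModule (n : ℕ) (H : Type*) [AddCommGroup H] [Module ℝ H] where
  smulR : H → CliffAlg n → H
  inner : H → H → CliffAlg n
  smulR_add : ∀ x a b, smulR x (a + b) = smulR x a + smulR x b
  add_smulR : ∀ x y a, smulR (x + y) a = smulR x a + smulR y a
  smulR_mul : ∀ x a b, smulR x (cmul a b) = smulR (smulR x a) b
  smulR_one : ∀ x, smulR x cone = x
  smulR_real : ∀ (r : ℝ) x a, smulR (r • x) a = r • smulR x a
  real_smulR : ∀ (r : ℝ) x a, smulR x (r • a) = r • smulR x a
  inner_add_left : ∀ x y z, inner (x + y) z = inner x z + inner y z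
  inner_add_right : ∀ x y z, inner x (y + z) = inner x y + inner x z
  conj_inner : ∀ x y, cconj (inner x y) = inner y x
  inner_smulR_left : ∀ x y a, inner (smulR x a) y = cmul (inner x y) a
  inner_self_pos : ∀ x, CPos (inner x x)
  inner_self_eq_zero : ∀ x, inner x x = 0 → x = 0

variable {n : ℕ} {H : Type*} [AddCommGroup H] [Module ℝ H]

/-- The norm `‖x‖ = (Re⟨x,x⟩)^{1/2}` on a Clifford module. -/
noncomputable def cnrm (CM : CModule n H) (x : H) : ℝ := Real.sqrt (cre (CM.inner x x))

/-- Convergence of a sequence with respect to the Clifford-module norm. -/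
def SeqLim (CM : CModule n H) (u : ℕ → H) (x : H) : Prop :=
  ∀ ε : ℝ, 0 < ε → ∃ N : ℕ, ∀ m ≥ N, cnrm CM (u m - x) < ε

/-- Cauchy sequences with respect to the Clifford-module norm. -/
def IsCauchySeq' (CM : CModule n H) (u : ℕ → H) : Prop :=
  ∀ ε : ℝ, 0 < ε → ∃ N : ℕ, ∀ p ≥ N, ∀ q ≥ N, cnrm CM (u p - u q) < ε

/-- Completeness of the Clifford module (every Cauchy sequence converges). -/
def IsComplete' (CM : CModule n H) : Prop :=
  ∀ u : ℕ → H, IsCauchySeq' CM u → ∃ x : H, SeqLim CM u x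

/-- (Sequentially) closed subsets of a Clifford module. -/
def SeqClosed (CM : CModule n H) (K : Set H) : Prop :=
  ∀ (u : ℕ → H) (x : H), (∀ i, u i ∈ K) → SeqLim CM u x → x ∈ K

/-- Right submodules of a Clifford module. -/
def IsRightSubmodule (CM : CModule n H) (Y : Set H) : Prop :=
  (0 : H) ∈ Y ∧ (∀ x ∈ Y, ∀ y ∈ Y, x + y ∈ Y) ∧
  (∀ x ∈ Y, ∀ r : ℝ, r • x ∈ Y) ∧ (∀ x ∈ Y, ∀ a : CliffAlg n, CM.smulR x a ∈ Y)

/-- Dense subsets of a Clifford module. -/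
def DenseSub (CM : CModule n H) (D : Set H) : Prop :=
  ∀ x : H, ∀ ε : ℝ, 0 < ε → ∃ y ∈ D, cnrm CM (x - y) < ε

/-- Right linearity of an operator on its domain `D`. -/
def IsRightLinearOn (CM : CModule n H) (D : Set H) (T : H → H) : Prop :=
  (∀ x ∈ D, ∀ y ∈ D, T (x + y) = T x + T y) ∧
  (∀ x ∈ D, ∀ r : ℝ, T (r • x) = r • T x) ∧
  (∀ x ∈ D, ∀ a : CliffAlg n, T (CM.smulR x a) = CM.smulR (T x) a)

/-- The orthogonal complement `Y^⊥ = {x : ⟨x,y⟩ = 0 for all y ∈ Y}`. -/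
def ocSet (CM : CModule n H) (Y : Set H) : Set H := {x | ∀ y ∈ Y, CM.inner x y = 0}

/-- A closed operator: the graph is (sequentially) closed. -/
def GraphClosed (CM : CModule n H) (D : Set H) (T : H → H) : Prop :=
  ∀ (u : ℕ → H) (x y : H), (∀ i, u i ∈ D) → SeqLim CM u x →
    SeqLim CM (fun i => T (u i)) y → x ∈ D ∧ T x = y

/-- The operator `Q_s(T) = T² - 2 Re(s) T + |s|² I` associated with the paravector
`s = (s₀, (s₁,…,sₙ))`. -/
def QsOp {n : ℕ} (T : H → H) (s : ℝ × (Fin n → ℝ)) : H → H := fun x =>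
  T (T x) - (2 * s.1) • T x + (s.1 ^ 2 + ∑ i, s.2 i ^ 2) • x

/-- Membership of the paravector `s` in the `S`-resolvent set of the (possibly
unbounded) operator `T` with domain `D`: `Q_s(T)` is injective on `D(T²)`, has dense
range, and has bounded inverse. -/
def InRhoS (CM : CModule n H) (D : Set H) (T : H → H) (s : ℝ × (Fin n → ℝ)) : Prop :=
  (∀ x, (x ∈ D ∧ T x ∈ D) → ∀ y, (y ∈ D ∧ T y ∈ D) → QsOp T s x = QsOp T s y → x = y) ∧
  (∀ z : H, ∀ ε : ℝ, 0 < ε → ∃ x, (x ∈ D ∧ T x ∈ D) ∧ cnrm CM (QsOp T s x - z) < ε) ∧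
  (∃ c : ℝ, ∀ x, (x ∈ D ∧ T x ∈ D) → cnrm CM x ≤ c * cnrm CM (QsOp T s x))

/-- The `S`-spectrum of a bounded operator `T`: the paravectors `s` for which
`Q_s(T)` has no bounded two-sided inverse. -/
def sSpec (CM : CModule n H) (T : H → H) : Set (ℝ × (Fin n → ℝ)) :=
  {s | ¬ ∃ B : H → H, (∀ x, B (QsOp T s x) = x) ∧ (∀ x, QsOp T s (B x) = x) ∧
        ∃ c : ℝ, ∀ x, cnrm CM (B x) ≤ c * cnrm CM x}

/-- The operator norm `‖T‖ = sup_{‖x‖ ≤ 1} ‖T x‖`. -/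
noncomputable def opNorm' (CM : CModule n H) (T : H → H) : ℝ :=
  sSup {r : ℝ | ∃ x : H, cnrm CM x ≤ 1 ∧ r = cnrm CM (T x)}


-- pairs lemma
lemma sum_filter_lt {n : ℕ} (S : Finset (Fin n)) :
    2 * (∑ t ∈ S, (S.filter fun s => t < s).card) + S.card = S.card * S.card := by
  have h1 : (∑ t ∈ S, (S.filter fun s => t < s).card)
      = ∑ t ∈ S, ∑ s ∈ S, if t < s then 1 else 0 := by
    refine Finset.sum_congr rfl fun t _ => ?_
    rw [Finset.card_filter]
  have h2 : (∑ t ∈ S, (S.filter fun s => t < s).card)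
      = ∑ t ∈ S, ∑ s ∈ S, if s < t then 1 else 0 := by
    rw [h1, Finset.sum_comm]
  have h3 : (∑ t ∈ S, (S.filter fun s => t < s).card) +
      ((∑ t ∈ S, (S.filter fun s => t < s).card) + S.card) = S.card * S.card := by
    nth_rewrite 1 [h1]; nth_rewrite 1 [h2]
    have : ∀ t ∈ S, ((∑ s ∈ S, if t < s then 1 else 0) + ((∑ s ∈ S, if s < t then 1 else 0) + 1))
        = S.card := by
      intro t ht
      have : (∑ s ∈ S, if t < s then 1 else 0) + ((∑ s ∈ S, if s < t then 1 else 0) + 1)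
          = ∑ s ∈ S, ((if t < s then 1 else 0) + (if s < t then 1 else 0) + (if s = t then 1 else 0)) := by
        rw [Finset.sum_add_distrib, Finset.sum_add_distrib, Finset.sum_ite_eq' S t (fun _ => 1)]
        simp [ht, add_assoc]
      rw [this]
      have : ∀ s ∈ S, ((if t < s then 1 else 0) + (if s < t then 1 else 0) + (if s = t then 1 else 0)) = 1 := by
        intro s _
        rcases lt_trichotomy t s with h | h | h
        · simp [h, h.ne', not_lt.mpr h.le]
        · simp [h]
        · simp [h, h.ne, not_lt.mpr h.le]
      rw [Finset.sum_congr rfl this, Finset.sum_const, smul_eq_mul, mul_one]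
    calc (∑ t ∈ S, ∑ s ∈ S, if t < s then 1 else 0) +
        ((∑ t ∈ S, ∑ s ∈ S, if s < t then 1 else 0) + S.card)
        = ∑ t ∈ S, ((∑ s ∈ S, if t < s then 1 else 0) + ((∑ s ∈ S, if s < t then 1 else 0) + 1)) := by
          rw [Finset.sum_add_distrib, Finset.sum_add_distrib, Finset.sum_const, smul_eq_mul, mul_one]
      _ = ∑ _t ∈ S, S.card := Finset.sum_congr rfl this
      _ = S.card * S.card := by rw [Finset.sum_const, smul_eq_mul]
  omega

lemma csign_self {n : ℕ} (S : Finset (Fin n)) :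
    csign S S * (-1 : ℝ) ^ (S.card * (S.card + 1) / 2) = 1 := by
  unfold csign
  rw [← pow_add]
  apply Even.neg_one_pow
  have h1 := sum_filter_lt S
  have h2 : 2 * (S.card * (S.card + 1) / 2) = S.card * (S.card + 1) := by
    rw [Nat.two_mul_div_two_of_even]
    exact Nat.even_mul_succ_self S.card
  have h3 : S.card * (S.card + 1) = S.card * S.card + S.card := by ring
  rw [Finset.inter_self]
  set P := ∑ t ∈ S, (S.filter fun s => t < s).card
  set k := S.card
  set Q := k * (k + 1) / 2
  rw [Nat.even_iff]
  omega

lemma csign_ne_zero {n : ℕ} (S T : Finset (Fin n)) : csign S T ≠ 0 := by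
  unfold csign; exact pow_ne_zero _ (by norm_num)

-- basis delta
def cdelta {n : ℕ} (T : Finset (Fin n)) : CliffAlg n := fun S => if S = T then 1 else 0

lemma cmul_cone_right {n : ℕ} (a : CliffAlg n) : cmul a cone = a := by
  funext U
  unfold cmul cone
  have : ∀ S : Finset (Fin n), (∑ T : Finset (Fin n),
      if symmDiff S T = U then a S * (if T = ∅ then 1 else 0) * csign S T else 0)
      = if S = U then a S else 0 := by
    intro S
    rw [Finset.sum_eq_single (∅ : Finset (Fin n))]
    · have hs : symmDiff S (∅ : Finset (Fin n)) = S := by simp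
      simp [hs, csign, Finset.bot_eq_empty]
    · intro T _ hT; simp [hT]
    · intro h; exact absurd (Finset.mem_univ _) h
  rw [Finset.sum_congr rfl fun S _ => this S, Finset.sum_ite_eq' Finset.univ U a]
  simp

lemma cmul_zero_left {n : ℕ} (b : CliffAlg n) : cmul 0 b = 0 := by
  funext U; unfold cmul; simp

lemma cmul_smul_right {n : ℕ} (r : ℝ) (a b : CliffAlg n) :
    cmul a (r • b) = r • cmul a b := by
  funext U
  show (cmul a (r • b)) U = r * cmul a b U
  unfold cmul
  rw [Finset.mul_sum]
  refine Finset.sum_congr rfl fun S _ => ?_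
  rw [Finset.mul_sum]
  refine Finset.sum_congr rfl fun T _ => ?_
  by_cases h : symmDiff S T = U <;> simp [h] <;> ring

lemma cre_cmul_cdelta {n : ℕ} (c : CliffAlg n) (T : Finset (Fin n)) :
    cre (cmul c (cdelta T)) = c T * csign T T := by
  unfold cre cmul cdelta
  have : ∀ S : Finset (Fin n), (∑ T' : Finset (Fin n),
      if symmDiff S T' = ∅ then c S * (if T' = T then 1 else 0) * csign S T' else 0)
      = if S = T then c T * csign T T else 0 := by
    intro S
    rw [Finset.sum_eq_single T]
    · by_cases h : S = T
      · subst h; simp [symmDiff_self, csign]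
      · have : symmDiff S T ≠ ∅ := fun hh => h (Finset.symmDiff_eq_empty.mp hh)
        simp [h, this]
    · intro T' _ hT'; simp [hT']
    · intro h; exact absurd (Finset.mem_univ _) h
  rw [Finset.sum_congr rfl fun S _ => this S, Finset.sum_ite_eq' Finset.univ T]
  simp

lemma cre_cmul_cconj {n : ℕ} (b : CliffAlg n) :
    cre (cmul b (cconj b)) = ∑ S : Finset (Fin n), b S ^ 2 := by
  unfold cre cmul
  have : ∀ S : Finset (Fin n), (∑ T : Finset (Fin n),
      if symmDiff S T = ∅ then b S * cconj b T * csign S T else 0) = b S ^ 2 := by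
    intro S
    rw [Finset.sum_eq_single S]
    · simp only [symmDiff_self, Finset.bot_eq_empty, if_pos rfl, ite_true]
      unfold cconj
      have h := csign_self S
      linear_combination (b S ^ 2) * h
    · intro T _ hT
      have : symmDiff S T ≠ ∅ := fun hh => hT (Finset.symmDiff_eq_empty.mp hh).symm
      simp [this]
    · intro h; exact absurd (Finset.mem_univ _) h
  rw [Finset.sum_congr rfl fun S _ => this S]

lemma cconj_zero {n : ℕ} : cconj (0 : CliffAlg n) = 0 := by
  funext S; unfold cconj; simp

lemma cre_cconj {n : ℕ} (a : CliffAlg n) : cre (cconj a) = cre a := by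
  unfold cre cconj; norm_num

section ModuleLemmas
variable {n : ℕ} {H : Type*} [AddCommGroup H] [Module ℝ H] (CM : CModule n H)

/-- The real part of the Clifford inner product. -/
noncomputable def rinner (x y : H) : ℝ := cre (CM.inner x y)

lemma cm_inner_zero_left (y : H) : CM.inner 0 y = 0 := by
  have h := CM.inner_add_left 0 0 y
  rw [add_zero] at h
  exact left_eq_add.mp h

lemma cm_inner_zero_right (x : H) : CM.inner x 0 = 0 := by
  rw [← CM.conj_inner, cm_inner_zero_left, cconj_zero]

lemma smul_eq_smulR (r : ℝ) (x : H) : r • x = CM.smulR x (r • cone) := by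
  rw [CM.real_smulR, CM.smulR_one]

lemma cm_inner_smul_left (r : ℝ) (x y : H) : CM.inner (r • x) y = r • CM.inner x y := by
  rw [smul_eq_smulR CM r x, CM.inner_smulR_left, cmul_smul_right, cmul_cone_right]

lemma rinner_symm (x y : H) : rinner CM x y = rinner CM y x := by
  unfold rinner
  rw [← CM.conj_inner x y, cre_cconj]

lemma rinner_add_left (x y z : H) : rinner CM (x + y) z = rinner CM x z + rinner CM y z := by
  unfold rinner; rw [CM.inner_add_left]; rfl

lemma rinner_smul_left (r : ℝ) (x y : H) : rinner CM (r • x) y = r * rinner CM x y := by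
  unfold rinner; rw [cm_inner_smul_left]; rfl

lemma rinner_self_nonneg (x : H) : 0 ≤ rinner CM x x := by
  obtain ⟨b, hb⟩ := CM.inner_self_pos x
  unfold rinner
  rw [hb, cre_cmul_cconj]
  exact Finset.sum_nonneg fun S _ => sq_nonneg _

lemma rinner_self_definite (x : H) (h : rinner CM x x = 0) : x = 0 := by
  obtain ⟨b, hb⟩ := CM.inner_self_pos x
  unfold rinner at h
  rw [hb, cre_cmul_cconj] at h
  have hb0 : b = 0 := by
    funext S
    have := (Finset.sum_eq_zero_iff_of_nonneg (fun S _ => sq_nonneg (b S))).mp h S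
      (Finset.mem_univ S)
    exact pow_eq_zero_iff (by norm_num) |>.mp this
  apply CM.inner_self_eq_zero
  rw [hb, hb0, cmul_zero_left]

/-- For a set closed under the right Clifford action, Clifford-orthogonality is
equivalent to real orthogonality. -/
lemma ocSet_eq_rinner (Z : Set H) (hZ : ∀ x ∈ Z, ∀ a : CliffAlg n, CM.smulR x a ∈ Z) :
    ocSet CM Z = {x | ∀ y ∈ Z, rinner CM y x = 0} := by
  ext x
  constructor
  · intro hx y hy
    rw [rinner_symm]
    unfold rinner
    rw [hx y hy]
    rfl
  · intro hx y hy
    have hyx : CM.inner y x = 0 := by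
      funext T
      have h1 := hx (CM.smulR y (cdelta T)) (hZ y hy (cdelta T))
      unfold rinner at h1
      rw [CM.inner_smulR_left, cre_cmul_cdelta] at h1
      exact (mul_eq_zero.mp h1).resolve_right (csign_ne_zero T T)
    rw [← CM.conj_inner y x, hyx, cconj_zero]

end ModuleLemmas

/-- Orthogonal decomposition: for a closed right submodule `Y` of a complete Clifford
module, `Y^⊥` is a closed right submodule, `H_n = Y ⊕ Y^⊥` (unique decomposition), and
`(Y^⊥)^⊥ = Y`. -/
theorem clifford_orthogonal_decomposition (CM : CModule n H) (hcomp : IsComplete' CM)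
    (Y : Set H) (hsub : IsRightSubmodule CM Y) (hcl : SeqClosed CM Y) :
    IsRightSubmodule CM (ocSet CM Y) ∧ SeqClosed CM (ocSet CM Y) ∧
    (∀ x : H, ∃! p : H × H, p.1 ∈ Y ∧ p.2 ∈ ocSet CM Y ∧ x = p.1 + p.2) ∧
    ocSet CM (ocSet CM Y) = Y := by
  classical
  letI core : InnerProductSpace.Core ℝ H :=
    { inner := rinner CM
      conj_inner_symm := fun x y => by simpa using rinner_symm CM y x
      re_inner_nonneg := fun x => by simpa using rinner_self_nonneg CM x
      definite := fun x h => rinner_self_definite CM x (by simpa using h)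
      add_left := fun x y z => rinner_add_left CM x y z
      smul_left := fun x y r => by simpa using rinner_smul_left CM r x y }
  letI : NormedAddCommGroup H := core.toNormedAddCommGroup
  letI : InnerProductSpace ℝ H := InnerProductSpace.ofCore core.toCore
  have hnorm : ∀ x : H, cnrm CM x = ‖x‖ := by
    intro x
    have h1 : cnrm CM x = Real.sqrt (rinner CM x x) := rfl
    have h2 : rinner CM x x = (inner ℝ x x : ℝ) := rfl
    rw [h1, h2, real_inner_self_eq_norm_mul_norm, Real.sqrt_mul_self (norm_nonneg x)]
  have hlim : ∀ (u : ℕ → H) (x : H),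
      SeqLim CM u x ↔ Filter.Tendsto u Filter.atTop (nhds x) := by
    intro u x
    rw [Metric.tendsto_atTop]
    constructor
    · intro h ε hε
      obtain ⟨N, hN⟩ := h ε hε
      exact ⟨N, fun m hm => by rw [dist_eq_norm, ← hnorm]; exact hN m hm⟩
    · intro h ε hε
      obtain ⟨N, hN⟩ := h ε hε
      exact ⟨N, fun m hm => by rw [hnorm, ← dist_eq_norm]; exact hN m hm⟩
  haveI : CompleteSpace H := Metric.complete_of_cauchySeq_tendsto (fun u hu => by
    have hc : IsCauchySeq' CM u := by
      intro ε hε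
      obtain ⟨N, hN⟩ := Metric.cauchySeq_iff.mp hu ε hε
      exact ⟨N, fun p hp q hq => by rw [hnorm, ← dist_eq_norm]; exact hN p hp q hq⟩
    obtain ⟨x, hx⟩ := hcomp u hc
    exact ⟨x, (hlim u x).mp hx⟩)
  let K : Submodule ℝ H :=
    { carrier := Y
      add_mem' := fun {a b} ha hb => hsub.2.1 a ha b hb
      zero_mem' := hsub.1
      smul_mem' := fun r x hx => hsub.2.2.1 x hx r }
  have hKc : IsClosed (K : Set H) :=
    IsSeqClosed.isClosed (fun u x hu hux => hcl u x hu ((hlim u x).mpr hux))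
  haveI : CompleteSpace K := hKc.completeSpace_coe
  haveI : Submodule.HasOrthogonalProjection K := Submodule.HasOrthogonalProjection.ofCompleteSpace K
  have hoc_sub : IsRightSubmodule CM (ocSet CM Y) := by
    refine ⟨?_, ?_, ?_, ?_⟩
    · intro y _; exact cm_inner_zero_left CM y
    · intro a ha b hb y hy
      rw [CM.inner_add_left, ha y hy, hb y hy, add_zero]
    · intro a ha r y hy
      rw [cm_inner_smul_left, ha y hy, smul_zero]
    · intro a ha c y hy
      rw [CM.inner_smulR_left, ha y hy, cmul_zero_left]
  have hKperp : ocSet CM Y = (Kᗮ : Set H) := by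
    rw [ocSet_eq_rinner CM Y hsub.2.2.2]
    ext x
    simp only [Set.mem_setOf_eq, SetLike.mem_coe, Submodule.mem_orthogonal]
    exact ⟨fun h y hy => h y hy, fun h y hy => h y hy⟩
  have hoc_closed : IsClosed (ocSet CM Y) := by
    rw [hKperp]; exact K.isClosed_orthogonal
  refine ⟨hoc_sub, ?_, ?_, ?_⟩
  · intro u x hu hux
    exact hoc_closed.isSeqClosed hu ((hlim u x).mp hux)
  · intro x
    obtain ⟨y, hy, z, hz, hxyz⟩ := K.exists_add_mem_mem_orthogonal x
    have hzoc : z ∈ ocSet CM Y := by rw [hKperp]; exact hz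
    refine ⟨(y, z), ⟨hy, hzoc, hxyz⟩, ?_⟩
    rintro ⟨y', z'⟩ ⟨hy', hz', hxyz'⟩
    have hw : y' - y = z - z' := by
      have : y + z = y' + z' := hxyz.symm.trans hxyz'
      apply eq_sub_of_add_eq
      rw [sub_add_eq_add_sub, ← this]
      abel
    have hwY : y' - y ∈ Y := by
      have := K.sub_mem hy' hy
      exact this
    have hwoc : y' - y ∈ ocSet CM Y := by
      rw [hw]
      have h1 : z - z' = z + (-1 : ℝ) • z' := by
        rw [neg_one_smul]; abel
      rw [h1]
      exact hoc_sub.2.1 z hzoc _ (hoc_sub.2.2.1 z' hz' (-1))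
    have hw0 : y' - y = 0 := by
      apply CM.inner_self_eq_zero
      exact hwoc (y' - y) hwY
    have hy'' : y' = y := by rwa [sub_eq_zero] at hw0
    have hz'' : z' = z := by
      have : z - z' = 0 := by rw [← hw, hw0]
      rw [sub_eq_zero] at this; exact this.symm
    exact Prod.ext hy'' hz''
  · rw [ocSet_eq_rinner CM _ hoc_sub.2.2.2]
    have h2 : {x : H | ∀ y ∈ ocSet CM Y, rinner CM y x = 0} = (Kᗮᗮ : Set H) := by
      ext x
      simp only [Set.mem_setOf_eq, SetLike.mem_coe, Submodule.mem_orthogonal]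
      constructor
      · intro h y hy
        exact h y (by rw [hKperp]; exact hy)
      · intro h y hy
        exact h y (by rw [hKperp] at hy; exact hy)
    rw [h2, Submodule.orthogonal_orthogonal]
    rfl
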